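/- arXiv:1008.1051 — 3 statements merged into one kernel-verified Lean document; each statement's English description precedes it below -/
import Mathlib

section
/- For every finite set P ⊆ ℝ² of n points in general position and every integer k with 0 ≤ k ≤ n(n−1)/2, there exists a finite set W ⊆ ℝ² such that the witness Gabriel graph GG⁻(P,W) has exactly k edges (i.e., exactly k unordered pairs of distinct points of P are adjacent). -/
open scoped RealInnerProductSpace

noncomputable section

/-- The Euclidean plane. -/
abbrev Pt := EuclideanSpace ℝ (Fin 2)

/-- The closed disk with diameter `ab`. -/
def diskD (a b : Pt) : Set Pt := Metric.closedBall (midpoint ℝ a b) (dist a b / 2)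

/-- `a` and `b` are adjacent in the witness Gabriel graph with witness set `W`. -/
def gabrielEdge (W : Set Pt) (a b : Pt) : Prop := (diskD a b \ {a, b}) ∩ W = ∅

/-- General position: no three points collinear, no four points concyclic. -/
def GenPos (S : Set Pt) : Prop :=
  (∀ a ∈ S, ∀ b ∈ S, ∀ c ∈ S, a ≠ b → a ≠ c → b ≠ c → ¬ Collinear ℝ ({a, b, c} : Set Pt)) ∧
  (∀ a ∈ S, ∀ b ∈ S, ∀ c ∈ S, ∀ d ∈ S, a ≠ b → a ≠ c → a ≠ d → b ≠ c → b ≠ d → c ≠ d →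
    ¬ EuclideanGeometry.Cospherical ({a, b, c, d} : Set Pt))

/-- Planar determinant `u₁v₂ − u₂v₁`. -/
def det2 (u v : Pt) : ℝ := u 0 * v 1 - u 1 * v 0

/-- Counterclockwise convex position. -/
def CCWConvexPos {m : ℕ} (q : Fin m → Pt) : Prop :=
  ∀ i j k : Fin m, i < j → j < k → 0 < det2 (q j - q i) (q k - q i)

/-- Cyclic successor in `Fin m`. -/
def cyclicSucc {m : ℕ} (hm : 0 < m) (i : Fin m) : Fin m :=
  ⟨((i : ℕ) + 1) % m, Nat.mod_lt _ hm⟩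

set_option maxHeartbeats 1000000

lemma inner_pt (u v : Pt) : ⟪u, v⟫ = u 0 * v 0 + u 1 * v 1 := by
  simp [PiLp.inner_apply, Fin.sum_univ_two, RCLike.inner_apply, mul_comm]

def dirE (x : ℝ) : Pt := WithLp.toLp 2 ![1, x]

lemma dirE0 (x : ℝ) : dirE x 0 = 1 := rfl
lemma dirE1 (x : ℝ) : dirE x 1 = x := rfl
lemma dirE_ne (x : ℝ) : dirE x ≠ 0 := by
  intro h
  have : dirE x 0 = 0 := by rw [h]; rfl
  rw [dirE0] at this; norm_num at this
lemma norm_dirE_pos (x : ℝ) : 0 < ‖dirE x‖ := norm_pos_iff.mpr (dirE_ne x)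
lemma norm_dirE_sq (x : ℝ) : ‖dirE x‖^2 = 1 + x^2 := by
  rw [← real_inner_self_eq_norm_sq, inner_pt, dirE0, dirE1]; ring

lemma pt_sub_ne {p q : Pt} (h : p ≠ q) : ¬((p - q) 0 = 0 ∧ (p - q) 1 = 0) := by
  rintro ⟨h0, h1⟩
  apply h
  have : p - q = 0 := by
    ext i
    fin_cases i
    · exact h0
    · exact h1
  exact sub_eq_zero.mp this

lemma quad_finite {a b c : ℝ} (h : ¬(a = 0 ∧ b = 0 ∧ c = 0)) :
    {x : ℝ | a * x^2 + b * x + c = 0}.Finite := by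
  have hp : (Polynomial.C a * Polynomial.X ^ 2 + Polynomial.C b * Polynomial.X
      + Polynomial.C c : Polynomial ℝ) ≠ 0 := by
    intro h0
    apply h
    refine ⟨?_, ?_, ?_⟩
    · have := congrArg (fun p => Polynomial.coeff p 2) h0
      simpa [Polynomial.coeff_add, Polynomial.coeff_C] using this
    · have := congrArg (fun p => Polynomial.coeff p 1) h0
      simpa [Polynomial.coeff_add, Polynomial.coeff_C] using this
    · have := congrArg (fun p => Polynomial.coeff p 0) h0
      simpa [Polynomial.coeff_add, Polynomial.coeff_C] using this
  apply (Polynomial.finite_setOf_isRoot hp).subset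
  intro x hx
  simp only [Set.mem_setOf_eq, Polynomial.IsRoot, Polynomial.eval_add, Polynomial.eval_mul,
    Polynomial.eval_pow, Polynomial.eval_C, Polynomial.eval_X]
  exact hx

lemma sup_disk {a b w : Pt} (E : Pt) (hw : w ∈ diskD a b) :
    ⟪w, E⟫ ≤ ⟪midpoint ℝ a b, E⟫ + (dist a b / 2) * ‖E‖ := by
  set m := midpoint ℝ a b
  have h1 : ‖w - m‖ ≤ dist a b / 2 := by
    simpa [diskD, Metric.mem_closedBall, dist_eq_norm] using hw
  have h2 : ⟪w - m, E⟫ ≤ ‖w - m‖ * ‖E‖ := real_inner_le_norm _ _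
  have h3 : ‖w - m‖ * ‖E‖ ≤ (dist a b / 2) * ‖E‖ :=
    mul_le_mul_of_nonneg_right h1 (norm_nonneg _)
  have h4 : ⟪w - m, E⟫ = ⟪w, E⟫ - ⟪m, E⟫ := inner_sub_left _ _ _
  linarith

lemma diskD_comm (a b : Pt) : diskD a b = diskD b a := by
  rw [diskD, diskD, midpoint_comm, dist_comm]

lemma gabrielEdge_comm {W : Set Pt} {a b : Pt} (h : gabrielEdge W a b) : gabrielEdge W b a := by
  rw [gabrielEdge, diskD_comm b a, Set.pair_comm b a]
  exact h

lemma gabrielEdge_mono {W W' : Set Pt} (h : W ⊆ W') {a b : Pt}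
    (hg : gabrielEdge W' a b) : gabrielEdge W a b := by
  rw [gabrielEdge] at hg ⊢
  exact Set.eq_empty_of_subset_empty (le_trans (Set.inter_subset_inter_right _ h) hg.le)

lemma dist_mid_left (a b : Pt) : dist a (midpoint ℝ a b) = dist a b / 2 := by
  rw [dist_left_midpoint]; norm_num; ring
lemma dist_mid_right (a b : Pt) : dist b (midpoint ℝ a b) = dist a b / 2 := by
  rw [midpoint_comm, dist_mid_left, dist_comm]

lemma disks_ne {P : Finset Pt} (hgp : GenPos (P : Set Pt)) {a b c d : Pt}
    (ha : a ∈ P) (hb : b ∈ P) (hc : c ∈ P) (hd : d ∈ P)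
    (hab : a ≠ b) (hcd : c ≠ d) (h1 : (c, d) ≠ (a, b)) (h2 : (c, d) ≠ (b, a)) :
    ¬(midpoint ℝ a b = midpoint ℝ c d ∧ dist a b = dist c d) := by
  rintro ⟨hm, hr⟩
  have hrb : (AffineEquiv.pointReflection ℝ (midpoint ℝ a b)) a = b := midpoint_eq_iff.mp rfl
  have hra : (AffineEquiv.pointReflection ℝ (midpoint ℝ a b)) b = a :=
    midpoint_eq_iff.mp (midpoint_comm b a)
  have hrd : (AffineEquiv.pointReflection ℝ (midpoint ℝ a b)) c = d := midpoint_eq_iff.mp hm.symm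
  have hrc : (AffineEquiv.pointReflection ℝ (midpoint ℝ a b)) d = c :=
    midpoint_eq_iff.mp ((midpoint_comm d c).trans hm.symm)
  by_cases hac : a = c
  · exact h1 (Prod.ext hac.symm (by rw [← hrd, ← hac, hrb]))
  by_cases had : a = d
  · exact h2 (Prod.ext (by rw [← hrc, ← had, hrb]) had.symm)
  by_cases hbc : b = c
  · exact h2 (Prod.ext hbc.symm (by rw [← hrd, ← hbc, hra]))
  by_cases hbd : b = d
  · exact hac ((AffineEquiv.pointReflection ℝ (midpoint ℝ a b)).injective (by rw [hrb, hrd, hbd]))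
  refine hgp.2 a ha b hb c hc d hd hab hac had hbc hbd hcd ⟨midpoint ℝ a b, dist a b / 2, ?_⟩
  intro p hp
  simp only [Set.mem_insert_iff, Set.mem_singleton_iff] at hp
  rcases hp with rfl | rfl | rfl | rfl
  · exact dist_mid_left _ _
  · exact dist_mid_right _ _
  · rw [hm, dist_mid_left, ← hr]
  · rw [hm, dist_mid_right, ← hr]

lemma exists_good_dir (P : Finset Pt) :
    ∃ x : ℝ,
      (∀ p ∈ P, ∀ q ∈ P, p ≠ q → (p - q) 0 * x - (p - q) 1 ≠ 0) ∧
      (∀ a ∈ P, ∀ b ∈ P, ∀ c ∈ P, ∀ d ∈ P,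
        ¬(midpoint ℝ a b = midpoint ℝ c d ∧ dist a b = dist c d) →
        ((midpoint ℝ a b - midpoint ℝ c d) 0 + (midpoint ℝ a b - midpoint ℝ c d) 1 * x)^2
          ≠ (dist c d / 2 - dist a b / 2)^2 * (1 + x^2)) := by
  classical
  set BadA : Set ℝ :=
    ⋃ p ∈ (P : Set Pt), ⋃ q ∈ (P : Set Pt),
      {x : ℝ | p ≠ q ∧ (p - q) 0 * x - (p - q) 1 = 0} with hBadA
  set BadB : Set ℝ :=
    ⋃ a ∈ (P : Set Pt), ⋃ b ∈ (P : Set Pt), ⋃ c ∈ (P : Set Pt), ⋃ d ∈ (P : Set Pt),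
      {x : ℝ | ¬(midpoint ℝ a b = midpoint ℝ c d ∧ dist a b = dist c d) ∧
        ((midpoint ℝ a b - midpoint ℝ c d) 0 + (midpoint ℝ a b - midpoint ℝ c d) 1 * x)^2
          - (dist c d / 2 - dist a b / 2)^2 * (1 + x^2) = 0} with hBadB
  have hAfin : BadA.Finite := by
    refine Set.Finite.biUnion P.finite_toSet fun p _ => ?_
    refine Set.Finite.biUnion P.finite_toSet fun q _ => ?_
    by_cases hpq : p = q
    · have : {x : ℝ | p ≠ q ∧ (p - q) 0 * x - (p - q) 1 = 0} = ∅ := by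
        ext x; simp [hpq]
      rw [this]; exact Set.finite_empty
    · have hne := pt_sub_ne hpq
      have : {x : ℝ | p ≠ q ∧ (p - q) 0 * x - (p - q) 1 = 0} ⊆
          {x : ℝ | (0:ℝ) * x^2 + (p - q) 0 * x + (-(p - q) 1) = 0} := by
        intro x hx
        simp only [Set.mem_setOf_eq] at hx ⊢
        linarith [hx.2]
      exact (quad_finite (fun hz => hne ⟨hz.2.1, by linarith [hz.2.2]⟩)).subset this
  have hBfin : BadB.Finite := by
    refine Set.Finite.biUnion P.finite_toSet fun a _ => ?_
    refine Set.Finite.biUnion P.finite_toSet fun b _ => ?_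
    refine Set.Finite.biUnion P.finite_toSet fun c _ => ?_
    refine Set.Finite.biUnion P.finite_toSet fun d _ => ?_
    by_cases hne : midpoint ℝ a b = midpoint ℝ c d ∧ dist a b = dist c d
    · have : {x : ℝ | ¬(midpoint ℝ a b = midpoint ℝ c d ∧ dist a b = dist c d) ∧
        ((midpoint ℝ a b - midpoint ℝ c d) 0 + (midpoint ℝ a b - midpoint ℝ c d) 1 * x)^2
          - (dist c d / 2 - dist a b / 2)^2 * (1 + x^2) = 0} = ∅ := by
        ext x
        simp only [Set.mem_setOf_eq, Set.mem_empty_iff_false, iff_false]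
        rintro ⟨hn, _⟩; exact hn hne
      rw [this]; exact Set.finite_empty
    · set Δ0 := (midpoint ℝ a b - midpoint ℝ c d) 0 with hΔ0
      set Δ1 := (midpoint ℝ a b - midpoint ℝ c d) 1 with hΔ1
      set Δr := dist c d / 2 - dist a b / 2 with hΔr
      have hcoeff : ¬((Δ1^2 - Δr^2) = 0 ∧ (2*Δ0*Δ1) = 0 ∧ (Δ0^2 - Δr^2) = 0) := by
        rintro ⟨c2, c1, c0⟩
        apply hne
        have h01 : Δ0 = 0 ∨ Δ1 = 0 := by
          rcases mul_eq_zero.mp c1 with h | h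
          · rcases mul_eq_zero.mp h with h' | h'
            · norm_num at h'
            · exact Or.inl h'
          · exact Or.inr h
        have hall : Δ0 = 0 ∧ Δ1 = 0 ∧ Δr = 0 := by
          rcases h01 with h | h
          · have hr : Δr = 0 := by nlinarith
            exact ⟨h, by nlinarith, hr⟩
          · have hr : Δr = 0 := by nlinarith
            exact ⟨by nlinarith, h, hr⟩
        constructor
        · have : midpoint ℝ a b - midpoint ℝ c d = 0 := by
            ext i
            fin_cases i
            · exact hall.1
            · exact hall.2.1
          exact sub_eq_zero.mp this
        · have := hall.2.2
          rw [hΔr] at this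
          linarith
      have hsub : {x : ℝ | ¬(midpoint ℝ a b = midpoint ℝ c d ∧ dist a b = dist c d) ∧
        ((midpoint ℝ a b - midpoint ℝ c d) 0 + (midpoint ℝ a b - midpoint ℝ c d) 1 * x)^2
          - (dist c d / 2 - dist a b / 2)^2 * (1 + x^2) = 0} ⊆
          {x : ℝ | (Δ1^2 - Δr^2) * x^2 + (2*Δ0*Δ1) * x + (Δ0^2 - Δr^2) = 0} := by
        intro x hx
        simp only [Set.mem_setOf_eq] at hx ⊢
        have h2 := hx.2
        rw [← hΔ0, ← hΔ1, ← hΔr] at h2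
        linear_combination h2
      exact (quad_finite hcoeff).subset hsub
  obtain ⟨x, hx⟩ := (hAfin.union hBfin).infinite_compl.nonempty
  rw [Set.mem_compl_iff, Set.mem_union, not_or] at hx
  obtain ⟨hxA, hxB⟩ := hx
  refine ⟨x, ?_, ?_⟩
  · intro p hp q hq hpq h0
    exact hxA (Set.mem_biUnion (Finset.mem_coe.mpr hp)
      (Set.mem_biUnion (Finset.mem_coe.mpr hq) ⟨hpq, h0⟩))
  · intro a ha b hb c hc d hd hne h0
    refine hxB (Set.mem_biUnion (Finset.mem_coe.mpr ha)
      (Set.mem_biUnion (Finset.mem_coe.mpr hb)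
        (Set.mem_biUnion (Finset.mem_coe.mpr hc)
          (Set.mem_biUnion (Finset.mem_coe.mpr hd) ⟨hne, by linarith⟩))))

def edgeSet (P W : Finset Pt) : Set (Pt × Pt) :=
  {pq : Pt × Pt | pq.1 ∈ P ∧ pq.2 ∈ P ∧ pq.1 ≠ pq.2 ∧ gabrielEdge (W : Set Pt) pq.1 pq.2}

lemma edgeSet_finite (P W : Finset Pt) : (edgeSet P W).Finite := by
  apply Set.Finite.subset (P ×ˢ P).finite_toSet
  rintro ⟨p, q⟩ h
  simp only [Finset.coe_product, Set.mem_prod]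
  exact ⟨h.1, h.2.1⟩

lemma kill_one (P : Finset Pt) (hgp : GenPos (P : Set Pt)) (W : Finset Pt)
    (hne : (edgeSet P W).Nonempty) :
    ∃ W' : Finset Pt, (edgeSet P W').ncard + 2 = (edgeSet P W).ncard := by
  classical
  obtain ⟨x, hxA, hxB⟩ := exists_good_dir P
  have hEpos := norm_dirE_pos x
  obtain ⟨⟨a, b⟩, habS, hmax⟩ := Set.exists_max_image (edgeSet P W)
    (fun pq => ⟪midpoint ℝ pq.1 pq.2, dirE x⟫ + (dist pq.1 pq.2 / 2) * ‖dirE x‖)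
    (edgeSet_finite P W) hne
  obtain ⟨ha, hb, hab, hedge⟩ := habS
  simp only at hmax hab ha hb hedge
  have hr0 : (0:ℝ) ≤ dist a b / 2 := by positivity
  set t : Pt := midpoint ℝ a b + ((dist a b / 2) / ‖dirE x‖) • dirE x with ht
  have htm : dist t (midpoint ℝ a b) = dist a b / 2 := by
    rw [ht]
    rw [dist_self_add_left]
    rw [norm_smul, Real.norm_eq_abs, abs_of_nonneg (div_nonneg hr0 hEpos.le)]
    field_simp
  have htdisk : t ∈ diskD a b := Metric.mem_closedBall.mpr htm.le
  have htinner : ⟪t, dirE x⟫ =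
      ⟪midpoint ℝ a b, dirE x⟫ + (dist a b / 2) * ‖dirE x‖ := by
    rw [ht, inner_add_left, real_inner_smul_left, real_inner_self_eq_norm_sq]
    field_simp
  -- t is not a or b
  have hkey : ∀ c : Pt, c - midpoint ℝ a b = ((dist a b / 2) / ‖dirE x‖) • dirE x →
      (c - midpoint ℝ a b) 0 * x - (c - midpoint ℝ a b) 1 = 0 := by
    intro c hc
    rw [hc]
    have h0 : (((dist a b / 2) / ‖dirE x‖) • dirE x) 0
        = ((dist a b / 2) / ‖dirE x‖) * dirE x 0 := rfl
    have h1 : (((dist a b / 2) / ‖dirE x‖) • dirE x) 1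
        = ((dist a b / 2) / ‖dirE x‖) * dirE x 1 := rfl
    rw [h0, h1, dirE0, dirE1]
    ring
  have hmida : a - midpoint ℝ a b = (2⁻¹ : ℝ) • (a - b) := by
    rw [midpoint_eq_smul_add, show ((⅟2:ℝ)) = (2⁻¹:ℝ) by norm_num]
    module
  have hmidb : b - midpoint ℝ a b = (2⁻¹ : ℝ) • (b - a) := by
    rw [midpoint_eq_smul_add, show ((⅟2:ℝ)) = (2⁻¹:ℝ) by norm_num]
    module
  have hsmul_comp : ∀ (u : Pt), ((2⁻¹ : ℝ) • u) 0 * x - ((2⁻¹ : ℝ) • u) 1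
      = 2⁻¹ * (u 0 * x - u 1) := by
    intro u
    have h0 : ((2⁻¹ : ℝ) • u) 0 = 2⁻¹ * u 0 := rfl
    have h1 : ((2⁻¹ : ℝ) • u) 1 = 2⁻¹ * u 1 := rfl
    rw [h0, h1]; ring
  have hta : t ≠ a := by
    intro h
    have h' : midpoint ℝ a b + ((dist a b / 2) / ‖dirE x‖) • dirE x = a := ht.symm.trans h
    have hc : a - midpoint ℝ a b = ((dist a b / 2) / ‖dirE x‖) • dirE x :=
      (eq_sub_of_add_eq' h').symm
    have := hkey a hc
    rw [hmida, hsmul_comp] at this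
    have : (a - b) 0 * x - (a - b) 1 = 0 := by linarith
    exact hxA a ha b hb hab this
  have htb : t ≠ b := by
    intro h
    have h' : midpoint ℝ a b + ((dist a b / 2) / ‖dirE x‖) • dirE x = b := ht.symm.trans h
    have hc : b - midpoint ℝ a b = ((dist a b / 2) / ‖dirE x‖) • dirE x :=
      (eq_sub_of_add_eq' h').symm
    have := hkey b hc
    rw [hmidb, hsmul_comp] at this
    have : (b - a) 0 * x - (b - a) 1 = 0 := by linarith
    exact hxA b hb a ha hab.symm this
  -- separation from other disks
  have hsep : ∀ c d : Pt, (c, d) ∈ edgeSet P W → (c, d) ≠ (a, b) → (c, d) ≠ (b, a) →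
      t ∉ diskD c d := by
    intro c d hcdS h1 h2 hmem
    obtain ⟨hc, hd, hcd, hgcd⟩ := hcdS
    simp only at hc hd hcd hgcd
    have hsup := sup_disk (dirE x) hmem
    have hle := hmax (c, d) ⟨hc, hd, hcd, hgcd⟩
    simp only at hle
    have hdisks := disks_ne hgp ha hb hc hd hab hcd h1 h2
    have hfne : ⟪midpoint ℝ c d, dirE x⟫ + (dist c d / 2) * ‖dirE x‖ ≠
        ⟪midpoint ℝ a b, dirE x⟫ + (dist a b / 2) * ‖dirE x‖ := by
      intro hEq
      have hin : ⟪midpoint ℝ a b - midpoint ℝ c d, dirE x⟫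
          = (dist c d / 2 - dist a b / 2) * ‖dirE x‖ := by
        rw [inner_sub_left]
        nlinarith [hEq]
      rw [inner_pt, dirE0, dirE1] at hin
      apply hxB a ha b hb c hc d hd hdisks
      have hnsq := norm_dirE_sq x
      have heq1 : (midpoint ℝ a b - midpoint ℝ c d) 0 + (midpoint ℝ a b - midpoint ℝ c d) 1 * x
          = (dist c d / 2 - dist a b / 2) * ‖dirE x‖ := by linarith [hin]
      calc ((midpoint ℝ a b - midpoint ℝ c d) 0 + (midpoint ℝ a b - midpoint ℝ c d) 1 * x)^2
          = ((dist c d / 2 - dist a b / 2) * ‖dirE x‖)^2 := by rw [heq1]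
        _ = (dist c d / 2 - dist a b / 2)^2 * ‖dirE x‖^2 := by ring
        _ = (dist c d / 2 - dist a b / 2)^2 * (1 + x^2) := by rw [hnsq]
    rw [htinner] at hsup
    have : ⟪midpoint ℝ c d, dirE x⟫ + (dist c d / 2) * ‖dirE x‖ =
        ⟪midpoint ℝ a b, dirE x⟫ + (dist a b / 2) * ‖dirE x‖ := le_antisymm hle hsup
    exact hfne this
  -- the new witness set
  refine ⟨insert t W, ?_⟩
  have hW'coe : ((insert t W : Finset Pt) : Set Pt) = insert t (W : Set Pt) := by
    simp
  have hnotedge : ∀ u v : Pt, t ∈ diskD u v → t ∉ ({u, v} : Set Pt) →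
      ¬ gabrielEdge ((insert t W : Finset Pt) : Set Pt) u v := by
    intro u v hdisk hnotuv hg
    have : t ∈ (diskD u v \ {u, v}) ∩ ((insert t W : Finset Pt) : Set Pt) := by
      refine ⟨⟨hdisk, hnotuv⟩, ?_⟩
      rw [hW'coe]; exact Set.mem_insert t _
    rw [hg] at this
    exact this
  have hESeq : edgeSet P (insert t W) = edgeSet P W \ {(a, b), (b, a)} := by
    ext ⟨c, d⟩
    constructor
    · rintro ⟨hc, hd, hcd, hg⟩
      refine ⟨⟨hc, hd, hcd, gabrielEdge_mono (by rw [hW'coe]; exact Set.subset_insert _ _) hg⟩, ?_⟩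
      simp only [Set.mem_insert_iff, Set.mem_singleton_iff, not_or]
      constructor
      · intro hEq
        rw [Prod.ext_iff] at hEq
        obtain ⟨rfl, rfl⟩ : c = a ∧ d = b := ⟨hEq.1, hEq.2⟩
        exact hnotedge c d htdisk (by simp [hta, htb]) hg
      · intro hEq
        rw [Prod.ext_iff] at hEq
        obtain ⟨rfl, rfl⟩ : c = b ∧ d = a := ⟨hEq.1, hEq.2⟩
        exact hnotedge c d (by rw [diskD_comm]; exact htdisk) (by simp [hta, htb]) hg
    · rintro ⟨⟨hc, hd, hcd, hg⟩, hnot⟩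
      simp only [Set.mem_insert_iff, Set.mem_singleton_iff, not_or] at hnot
      refine ⟨hc, hd, hcd, ?_⟩
      have hts : t ∉ diskD c d := hsep c d ⟨hc, hd, hcd, hg⟩ hnot.1 hnot.2
      rw [gabrielEdge, hW'coe, Set.inter_comm, Set.insert_inter_of_notMem (fun hmem => hts hmem.1),
        Set.inter_comm]
      exact hg
  rw [hESeq]
  have habmem : (a, b) ∈ edgeSet P W := ⟨ha, hb, hab, hedge⟩
  have hbamem : (b, a) ∈ edgeSet P W := ⟨hb, ha, hab.symm, gabrielEdge_comm hedge⟩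
  have hsub : ({(a, b), (b, a)} : Set (Pt × Pt)) ⊆ edgeSet P W := by
    rintro pq hpq
    simp only [Set.mem_insert_iff, Set.mem_singleton_iff] at hpq
    rcases hpq with rfl | rfl
    · exact habmem
    · exact hbamem
  have hpairne : ((a, b) : Pt × Pt) ≠ (b, a) := by
    intro h
    exact hab (congrArg Prod.fst h)
  have hcard2 : ({(a, b), (b, a)} : Set (Pt × Pt)).ncard = 2 := Set.ncard_pair hpairne
  have hdiff := Set.ncard_diff hsub ((edgeSet_finite P W).subset hsub)
  have hle2 : 2 ≤ (edgeSet P W).ncard := by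
    rw [← hcard2]
    exact Set.ncard_le_ncard hsub (edgeSet_finite P W)
  omega

/-- For every finite set `P ⊆ ℝ²` of `n` points in general position and every
`k ≤ n(n−1)/2`, there is a finite witness set `W` such that `GG⁻(P,W)` has exactly `k` edges
(counted here as `2k` ordered pairs of distinct adjacent vertices). -/
theorem witness_gabriel_any_number_of_edges
    (P : Finset Pt) (n : ℕ) (hcard : P.card = n) (hgp : GenPos (P : Set Pt))
    (k : ℕ) (hk : k ≤ n * (n - 1) / 2) :
    ∃ W : Finset Pt,
      {pq : Pt × Pt | pq.1 ∈ P ∧ pq.2 ∈ P ∧ pq.1 ≠ pq.2 ∧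
        gabrielEdge (W : Set Pt) pq.1 pq.2}.ncard = 2 * k := by
  classical
  have hNN : 2 * (n * (n - 1) / 2) = n * (n - 1) := by
    obtain ⟨c, hc⟩ := Nat.even_mul_pred_self n
    omega
  have hbase : (edgeSet P ∅).ncard = n * (n - 1) := by
    have hset : edgeSet P ∅ = (P.offDiag : Set (Pt × Pt)) := by
      ext pq
      simp [edgeSet, gabrielEdge, Finset.mem_offDiag, and_assoc]
    rw [hset, Set.ncard_coe_finset, Finset.offDiag_card, hcard, ← Nat.pred_eq_sub_one, Nat.mul_pred]
  have hstep : ∀ j, j ≤ n * (n - 1) / 2 →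
      ∃ W : Finset Pt, (edgeSet P W).ncard = n * (n - 1) - 2 * j := by
    intro j
    induction j with
    | zero => intro _; exact ⟨∅, by simpa using hbase⟩
    | succ i ih =>
      intro hle
      obtain ⟨W, hW⟩ := ih (Nat.le_of_succ_le hle)
      have hpos : (edgeSet P W).ncard ≠ 0 := by omega
      obtain ⟨W', hW'⟩ := kill_one P hgp W (Set.nonempty_of_ncard_ne_zero hpos)
      exact ⟨W', by omega⟩
  obtain ⟨W, hW⟩ := hstep (n * (n - 1) / 2 - k) (Nat.sub_le _ _)
  refine ⟨W, ?_⟩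
  show (edgeSet P W).ncard = 2 * k
  omega
end
end

section
/- Let P, W ⊆ ℝ² be finite and let a, b, c ∈ P be pairwise distinct points such that ab and bc are edges of the witness Gabriel graph GG⁻(P,W), i.e., (D(a,b) \ {a,b}) ∩ W = ∅ and (D(b,c) \ {b,c}) ∩ W = ∅. Then (i) every point p ∈ P with p ≠ b lying in the triangle convexHull{a,b,c} is adjacent to b in GG⁻(P,W), and (ii) W ∩ convexHull{a,b,c} ⊆ {a,b,c}. -/
open scoped RealInnerProductSpace

noncomputable section

lemma mem_diskD_iff {x a b : Pt} : x ∈ diskD a b ↔ ⟪x - a, x - b⟫ ≤ 0 := by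
  have hmid : x - midpoint ℝ a b = ((2:ℝ)⁻¹) • ((x - a) + (x - b)) := by
    rw [midpoint_eq_smul_add, invOf_eq_inv]; module
  have habv : a - b = (x - b) - (x - a) := by abel
  rw [diskD, Metric.mem_closedBall, dist_eq_norm, dist_eq_norm, hmid, habv]
  set u := x - a with hu
  set v := x - b with hv
  have h1 : ‖((2:ℝ)⁻¹) • (u + v)‖ = ‖u + v‖ / 2 := by
    rw [norm_smul, Real.norm_eq_abs, abs_of_nonneg (by norm_num : (0:ℝ) ≤ 2⁻¹)]; ring
  rw [h1]
  have h2 : ‖u + v‖ ^ 2 = ‖u‖ ^ 2 + 2 * ⟪u, v⟫ + ‖v‖ ^ 2 := norm_add_sq_real u v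
  have h3 : ‖v - u‖ ^ 2 = ‖v‖ ^ 2 - 2 * ⟪v, u⟫ + ‖u‖ ^ 2 := norm_sub_sq_real v u
  have hcomm : ⟪v, u⟫ = ⟪u, v⟫ := real_inner_comm u v
  have hn1 := norm_nonneg (u + v)
  have hn2 := norm_nonneg (v - u)
  constructor
  · intro h; nlinarith
  · intro h; nlinarith

lemma tri_rep {a b c p : Pt} (hp : p ∈ convexHull ℝ ({a, b, c} : Set Pt)) :
    ∃ α β γ : ℝ, 0 ≤ α ∧ 0 ≤ β ∧ 0 ≤ γ ∧ α + β + γ = 1 ∧ p = α • a + β • b + γ • c := by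
  rw [show ({a, b, c} : Set Pt) = insert a {b, c} from rfl,
    convexHull_insert (by simp), convexHull_pair] at hp
  rw [mem_convexJoin] at hp
  obtain ⟨a', ha', z, hz, hpz⟩ := hp
  rw [Set.mem_singleton_iff] at ha'
  subst ha'
  rw [segment_eq_image] at hz hpz
  obtain ⟨s, hs, hzeq⟩ := hz
  obtain ⟨t, ht, hpeq⟩ := hpz
  simp only [Set.mem_Icc] at hs ht
  simp only at hzeq hpeq
  obtain ⟨hs0, hs1⟩ := hs
  obtain ⟨ht0, ht1⟩ := ht
  refine ⟨1 - t, t * (1 - s), t * s, by linarith,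
    mul_nonneg ht0 (by linarith), mul_nonneg ht0 hs0, by ring, ?_⟩
  rw [← hpeq, ← hzeq]
  module

lemma inner_decomp {a b c p x : Pt} {α β γ : ℝ} (hsum : α + β + γ = 1)
    (hp : p = α • a + β • b + γ • c) :
    ⟪x - p, x - b⟫ = α * ⟪x - a, x - b⟫ + β * ⟪x - b, x - b⟫ + γ * ⟪x - c, x - b⟫ := by
  have hxp : x - p = α • (x - a) + β • (x - b) + γ • (x - c) := by
    rw [hp]
    have hx1 : x = (α + β + γ) • x := by rw [hsum, one_smul]
    nth_rewrite 1 [hx1]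
    module
  rw [hxp, inner_add_left, inner_add_left, real_inner_smul_left, real_inner_smul_left,
    real_inner_smul_left]

lemma disk_subset {a b c p : Pt} (hp : p ∈ convexHull ℝ ({a, b, c} : Set Pt)) :
    diskD p b ⊆ diskD a b ∪ diskD b c := by
  obtain ⟨α, β, γ, hα, hβ, hγ, hsum, hrep⟩ := tri_rep hp
  intro x hx
  rw [mem_diskD_iff] at hx
  rw [Set.mem_union, mem_diskD_iff, mem_diskD_iff]
  by_contra hcon
  push_neg at hcon
  obtain ⟨hA, hC⟩ := hcon
  have hC' : (0:ℝ) < ⟪x - c, x - b⟫ := by rwa [real_inner_comm]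
  rw [inner_decomp hsum hrep] at hx
  have hS : (0:ℝ) ≤ ⟪x - b, x - b⟫ := real_inner_self_nonneg
  have hα0 : α = 0 := by nlinarith [mul_nonneg hβ hS, mul_nonneg hγ hC'.le]
  have hγ0 : γ = 0 := by nlinarith [mul_nonneg hβ hS, mul_nonneg hα hA.le]
  have hS0 : ⟪x - b, x - b⟫ = 0 := by
    have hβ1 : β = 1 := by linarith
    nlinarith
  have hxb : x - b = 0 := inner_self_eq_zero (𝕜 := ℝ) (x := x - b) |>.mp hS0
  rw [hxb] at hA
  simp at hA

/-- For incident edges `ab`, `bc`, every vertex in triangle `abc` is adjacent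
to `b`, and the triangle contains no witness other than possibly `a,b,c`. -/
theorem incident_edges_triangle_property
    (P W : Finset Pt) (a b c : Pt) (ha : a ∈ P) (hb : b ∈ P) (hc : c ∈ P)
    (hab : a ≠ b) (hbc : b ≠ c) (hac : a ≠ c)
    (eab : gabrielEdge (W : Set Pt) a b) (ebc : gabrielEdge (W : Set Pt) b c) :
    (∀ p ∈ P, p ≠ b → p ∈ convexHull ℝ ({a, b, c} : Set Pt) →
      gabrielEdge (W : Set Pt) p b) ∧
    ((W : Set Pt) ∩ convexHull ℝ ({a, b, c} : Set Pt) ⊆ {a, b, c}) := by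
  have eab' : (diskD a b \ {a, b}) ∩ (W : Set Pt) = ∅ := eab
  have ebc' : (diskD b c \ {b, c}) ∩ (W : Set Pt) = ∅ := ebc
  have wab : ∀ x ∈ (W : Set Pt), x ∈ diskD a b → x = a ∨ x = b := by
    intro x hxW hxd
    by_contra h
    push_neg at h
    have hmem : x ∈ (diskD a b \ {a, b}) ∩ (W : Set Pt) :=
      ⟨⟨hxd, by simp [h.1, h.2]⟩, hxW⟩
    rw [eab'] at hmem
    exact hmem
  have wbc : ∀ x ∈ (W : Set Pt), x ∈ diskD b c → x = b ∨ x = c := by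
    intro x hxW hxd
    by_contra h
    push_neg at h
    have hmem : x ∈ (diskD b c \ {b, c}) ∩ (W : Set Pt) :=
      ⟨⟨hxd, by simp [h.1, h.2]⟩, hxW⟩
    rw [ebc'] at hmem
    exact hmem
  constructor
  · intro p hpP hpb hpt
    show (diskD p b \ {p, b}) ∩ (W : Set Pt) = ∅
    rw [Set.eq_empty_iff_forall_notMem]
    rintro w ⟨⟨hwd, hwne⟩, hwW⟩
    simp only [Set.mem_insert_iff, Set.mem_singleton_iff, not_or] at hwne
    obtain ⟨hwp, hwb⟩ := hwne
    obtain ⟨α, β, γ, hα, hβ, hγ, hsum, hrep⟩ := tri_rep hpt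
    rcases disk_subset hpt hwd with h1 | h2
    · rcases wab w hwW h1 with rfl | rfl
      · -- w = a
        rw [mem_diskD_iff, inner_decomp hsum hrep] at hwd
        simp only [sub_self, inner_zero_left, mul_zero, zero_add] at hwd
        have hSab : (0:ℝ) < ⟪w - b, w - b⟫ := by
          rw [real_inner_self_eq_norm_sq]
          exact pow_pos (norm_pos_iff.mpr (sub_ne_zero.mpr hab)) 2
        by_cases hCab : ⟪w - c, w - b⟫ ≤ 0
        · have hmem : w ∈ diskD b c := by
            rw [mem_diskD_iff, real_inner_comm]; exact hCab
          rcases wbc w hwW hmem with rfl | rfl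
          · exact hab rfl
          · exact hac rfl
        · push_neg at hCab
          have hβ0 : β = 0 := by nlinarith [mul_nonneg hγ hCab.le]
          have hγ0 : γ = 0 := by nlinarith [mul_nonneg hβ hSab.le]
          have hα1 : α = 1 := by linarith
          rw [hβ0, hγ0, hα1] at hrep
          simp at hrep
          exact hwp hrep.symm
      · exact hwb rfl
    · rcases wbc w hwW h2 with rfl | rfl
      · exact hwb rfl
      · -- w = c
        rw [mem_diskD_iff, inner_decomp hsum hrep] at hwd
        simp only [sub_self, inner_zero_left, mul_zero, add_zero] at hwd
        have hScb : (0:ℝ) < ⟪w - b, w - b⟫ := by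
          rw [real_inner_self_eq_norm_sq]
          exact pow_pos (norm_pos_iff.mpr (sub_ne_zero.mpr (Ne.symm hbc))) 2
        by_cases hCcb : ⟪w - a, w - b⟫ ≤ 0
        · have hmem : w ∈ diskD a b := by rw [mem_diskD_iff]; exact hCcb
          rcases wab w hwW hmem with rfl | rfl
          · exact hac rfl
          · exact hbc rfl
        · push_neg at hCcb
          have hβ0 : β = 0 := by nlinarith [mul_nonneg hα hCcb.le]
          have hα0 : α = 0 := by nlinarith [mul_nonneg hβ hScb.le]
          have hγ1 : γ = 1 := by linarith
          rw [hβ0, hα0, hγ1] at hrep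
          simp at hrep
          exact hwp hrep.symm
  · rintro w ⟨hwW, hwt⟩
    have hwd : w ∈ diskD w b := by
      rw [mem_diskD_iff]; simp
    rcases disk_subset hwt hwd with h1 | h2
    · rcases wab w hwW h1 with rfl | rfl <;> simp
    · rcases wbc w hwW h2 with rfl | rfl <;> simp
end
end

section
/- Let m ≥ 3 and let q : Fin m → ℝ² be points in counterclockwise convex position, and let B ⊆ Fin m (the 'black' indices) be nonempty and such that no two cyclically consecutive indices both belong to B (for no i are both i and i+1 (mod m) in B). Then there exists a family T of m − 2 three-element subsets of Fin m such that: each t ∈ T contains exactly one index of B; the triangles convexHull{q(i) : i ∈ t}, t ∈ T, have pairwise disjoint interiors; and the union of these triangles equals convexHull{q(0), …, q(m−1)}. -/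
open scoped RealInnerProductSpace

noncomputable section

namespace BT

variable {m : ℕ}

/-- Cyclic (counterclockwise) order on indices. -/
def ccw3 (a b c : Fin m) : Prop :=
  ((a:ℕ) < b ∧ (b:ℕ) < c) ∨ ((b:ℕ) < c ∧ (c:ℕ) < a) ∨ ((c:ℕ) < a ∧ (a:ℕ) < b)

/-- Cyclic successor within a finset. -/
def nextS (S : Finset (Fin m)) (i : Fin m) : Fin m :=
  if h : (S.filter (fun j => i < j)).Nonempty then (S.filter (fun j => i < j)).min' h
  else if h2 : S.Nonempty then S.min' h2 else i

/-- Cyclic predecessor within a finset. -/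
def prevS (S : Finset (Fin m)) (i : Fin m) : Fin m :=
  if h : (S.filter (fun j => j < i)).Nonempty then (S.filter (fun j => j < i)).max' h
  else if h2 : S.Nonempty then S.max' h2 else i

lemma nextS_mem {S : Finset (Fin m)} {i : Fin m} (hi : i ∈ S) : nextS S i ∈ S := by
  unfold nextS
  split_ifs with h h2
  · exact (Finset.mem_filter.mp (Finset.min'_mem _ h)).1
  · exact S.min'_mem h2
  · exact absurd ⟨i, hi⟩ h2

lemma nextS_ne {S : Finset (Fin m)} {i : Fin m} (hi : i ∈ S) (h2 : 2 ≤ S.card) :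
    nextS S i ≠ i := by
  unfold nextS
  split_ifs with h hne
  · have := (Finset.mem_filter.mp (Finset.min'_mem _ h)).2
    exact ne_of_gt this
  · intro heq
    have hle : ∀ j ∈ S, j ≤ i := by
      intro j hj
      by_contra hlt
      push_neg at hlt
      exact h ⟨j, Finset.mem_filter.mpr ⟨hj, hlt⟩⟩
    have hall : ∀ j ∈ S, j = i := fun j hj =>
      le_antisymm (hle j hj) (heq ▸ S.min'_le j hj)
    have : S.card ≤ 1 := Finset.card_le_one.mpr (fun a ha b hb => by rw [hall a ha, hall b hb])
    omega
  · exact absurd ⟨i, hi⟩ hne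

lemma nextS_ccw {S : Finset (Fin m)} {i w : Fin m} (hi : i ∈ S) (hw : w ∈ S)
    (hwi : w ≠ i) (hwn : w ≠ nextS S i) : ccw3 i (nextS S i) w := by
  have hwi' : (w:ℕ) ≠ (i:ℕ) := fun h => hwi (Fin.ext h)
  unfold nextS at *
  split_ifs at hwn ⊢ with h hne
  · have hmem := Finset.mem_filter.mp (Finset.min'_mem _ h)
    have hni : (i:ℕ) < ((S.filter (fun j => i < j)).min' h : ℕ) := hmem.2
    rcases lt_or_gt_of_ne hwi' with hlt | hgt
    · right; right
      exact ⟨hlt, hni⟩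
    · -- w > i, so w in filter, so min' ≤ w, and ≠ so <
      have hwf : w ∈ S.filter (fun j => i < j) := Finset.mem_filter.mpr ⟨hw, hgt⟩
      have hle := Finset.min'_le _ w hwf
      have hlt : ((S.filter (fun j => i < j)).min' h : ℕ) < (w:ℕ) :=
        lt_of_le_of_ne hle (fun hh => hwn (Fin.ext hh.symm))
      left; exact ⟨hni, hlt⟩
  · -- filter empty: i is max, nextS = min S
    have hle : ∀ j ∈ S, (j:ℕ) ≤ (i:ℕ) := by
      intro j hj
      by_contra hlt
      push_neg at hlt
      exact h ⟨j, Finset.mem_filter.mpr ⟨hj, hlt⟩⟩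
    have hwle : (w:ℕ) < (i:ℕ) := lt_of_le_of_ne (hle w hw) hwi'
    have hminle : ((S.min' hne : Fin m) : ℕ) ≤ (w:ℕ) := S.min'_le w hw
    have hminlt : ((S.min' hne : Fin m) : ℕ) < (w:ℕ) :=
      lt_of_le_of_ne hminle (fun hh => hwn (Fin.ext hh.symm))
    right; left; exact ⟨hminlt, hwle⟩
  · exact absurd ⟨i, hi⟩ hne

lemma prevS_mem {S : Finset (Fin m)} {i : Fin m} (hi : i ∈ S) : prevS S i ∈ S := by
  unfold prevS
  split_ifs with h h2
  · exact (Finset.mem_filter.mp (Finset.max'_mem _ h)).1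
  · exact S.max'_mem h2
  · exact absurd ⟨i, hi⟩ h2

lemma prevS_ne {S : Finset (Fin m)} {i : Fin m} (hi : i ∈ S) (h2 : 2 ≤ S.card) :
    prevS S i ≠ i := by
  unfold prevS
  split_ifs with h hne
  · exact ne_of_lt (Finset.mem_filter.mp (Finset.max'_mem _ h)).2
  · intro heq
    have hge : ∀ j ∈ S, i ≤ j := by
      intro j hj
      by_contra hlt
      push_neg at hlt
      exact h ⟨j, Finset.mem_filter.mpr ⟨hj, hlt⟩⟩
    have hall : ∀ j ∈ S, j = i := fun j hj =>
      le_antisymm (heq ▸ Finset.le_max' S j hj) (hge j hj)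
    have : S.card ≤ 1 := Finset.card_le_one.mpr (fun a ha b hb => by rw [hall a ha, hall b hb])
    omega
  · exact absurd ⟨i, hi⟩ hne

lemma prevS_ccw {S : Finset (Fin m)} {i w : Fin m} (hi : i ∈ S) (hw : w ∈ S)
    (hwi : w ≠ i) (hwp : w ≠ prevS S i) : ccw3 (prevS S i) i w := by
  have hwi' : (w:ℕ) ≠ (i:ℕ) := fun h => hwi (Fin.ext h)
  unfold prevS at *
  split_ifs at hwp ⊢ with h hne
  · have hmem := Finset.mem_filter.mp (Finset.max'_mem _ h)
    have hpi : (((S.filter (fun j => j < i)).max' h : Fin m) : ℕ) < (i:ℕ) := hmem.2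
    rcases lt_or_gt_of_ne hwi' with hlt | hgt
    · have hwf : w ∈ S.filter (fun j => j < i) := Finset.mem_filter.mpr ⟨hw, hlt⟩
      have hle := Finset.le_max' _ w hwf
      have hlt2 : (w:ℕ) < (((S.filter (fun j => j < i)).max' h : Fin m) : ℕ) :=
        lt_of_le_of_ne hle (fun hh => hwp (Fin.ext hh))
      right; right; exact ⟨hlt2, hpi⟩
    · left; exact ⟨hpi, hgt⟩
  · have hge : ∀ j ∈ S, (i:ℕ) ≤ (j:ℕ) := by
      intro j hj
      by_contra hlt
      push_neg at hlt
      exact h ⟨j, Finset.mem_filter.mpr ⟨hj, hlt⟩⟩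
    have hiw : (i:ℕ) < (w:ℕ) := lt_of_le_of_ne (hge w hw) (fun hh => hwi' hh.symm)
    have hwmax : (w:ℕ) ≤ ((S.max' hne : Fin m) : ℕ) := Finset.le_max' S w hw
    have hwlt : (w:ℕ) < ((S.max' hne : Fin m) : ℕ) :=
      lt_of_le_of_ne hwmax (fun hh => hwp (Fin.ext hh))
    right; left; exact ⟨hiw, hwlt⟩
  · exact absurd ⟨i, hi⟩ hne

lemma nextS_unique {S : Finset (Fin m)} {i n : Fin m} (hi : i ∈ S) (h2 : 2 ≤ S.card)
    (hn : n ∈ S) (hni : n ≠ i) (hspec : ∀ w ∈ S, w ≠ i → w ≠ n → ccw3 i n w) :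
    nextS S i = n := by
  by_contra hne
  have hn' := nextS_mem hi
  have hn'i := nextS_ne hi h2
  have h1 : ccw3 i n (nextS S i) := hspec _ hn' hn'i (fun h => hne h)
  have h2' : ccw3 i (nextS S i) n := nextS_ccw hi hn hni (fun h => hne h.symm)
  unfold ccw3 at h1 h2'
  omega

lemma nextS_prevS {S : Finset (Fin m)} {i : Fin m} (hi : i ∈ S) (h2 : 2 ≤ S.card) :
    nextS S (prevS S i) = i := by
  apply nextS_unique (prevS_mem hi) h2 hi (fun h => prevS_ne hi h2 h.symm)
  intro w hw hwp hwi
  exact prevS_ccw hi hw hwi hwp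

lemma nextS_nextS_ne {S : Finset (Fin m)} {i : Fin m} (hi : i ∈ S) (h3 : 3 ≤ S.card) :
    nextS S (nextS S i) ≠ i := by
  intro heq
  have h2 : 2 ≤ S.card := by omega
  set n := nextS S i with hn
  have hnS : n ∈ S := nextS_mem hi
  have hni : n ≠ i := nextS_ne hi h2
  have : ({i, n} : Finset (Fin m)).card = 2 := by
    rw [Finset.card_insert_of_notMem (by simp [Ne.symm hni]), Finset.card_singleton]
  have hex : (S \ {i, n}).Nonempty := by
    rw [← Finset.card_pos]
    have := Finset.card_le_card (Finset.inter_subset_right (s₁ := S) (s₂ := {i, n}))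
    have hsd := Finset.card_sdiff_add_card_inter S ({i, n} : Finset (Fin m))
    omega
  obtain ⟨w, hw⟩ := hex
  rw [Finset.mem_sdiff] at hw
  obtain ⟨hwS, hwni⟩ := hw
  simp only [Finset.mem_insert, Finset.mem_singleton, not_or] at hwni
  have c1 : ccw3 i n w := nextS_ccw hi hwS hwni.1 hwni.2
  have c2 : ccw3 n i w := by
    have := nextS_ccw hnS hwS hwni.2 (by rw [heq]; exact hwni.1)
    rwa [heq] at this
  unfold ccw3 at c1 c2
  omega

lemma nextS_erase {S : Finset (Fin m)} {b i : Fin m} (hb : b ∈ S) (hi : i ∈ S)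
    (hib : i ≠ b) (h3 : 3 ≤ S.card) :
    nextS (S.erase b) i = if nextS S i = b then nextS S b else nextS S i := by
  have h2 : 2 ≤ S.card := by omega
  have h2' : 2 ≤ (S.erase b).card := by
    rw [Finset.card_erase_of_mem hb]; omega
  have hiE : i ∈ S.erase b := Finset.mem_erase.mpr ⟨hib, hi⟩
  split_ifs with hnb
  · -- nextS S i = b, candidate nextS S b
    have hnbS : nextS S b ∈ S := nextS_mem hb
    have hnbb : nextS S b ≠ b := nextS_ne hb h2
    have hnbi : nextS S b ≠ i := by
      rw [← hnb]; exact nextS_nextS_ne hi h3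
    apply nextS_unique hiE h2' (Finset.mem_erase.mpr ⟨hnbb, hnbS⟩) hnbi
    intro w hwE hwi hwn
    rw [Finset.mem_erase] at hwE
    obtain ⟨hwb, hwS⟩ := hwE
    have c1 : ccw3 i b w := by
      have := nextS_ccw hi hwS hwi (by rw [hnb]; exact hwb)
      rwa [hnb] at this
    have c2 : ccw3 b (nextS S b) w := nextS_ccw hb hwS hwb hwn
    have c3 : ccw3 i b (nextS S b) := by
      have := nextS_ccw hi hnbS hnbi (by rw [hnb]; exact hnbb)
      rwa [hnb] at this
    unfold ccw3 at c1 c2 c3 ⊢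
    omega
  · have hnS : nextS S i ∈ S := nextS_mem hi
    have hni : nextS S i ≠ i := nextS_ne hi h2
    apply nextS_unique hiE h2' (Finset.mem_erase.mpr ⟨hnb, hnS⟩) hni
    intro w hwE hwi hwn
    rw [Finset.mem_erase] at hwE
    exact nextS_ccw hi hwE.2 hwi hwn

lemma no3cycle {S : Finset (Fin m)} {p v s : Fin m} (hp : p ∈ S) (h4 : 4 ≤ S.card)
    (hpv : nextS S p = v) (hvs : nextS S v = s) (hsp : nextS S s = p) : False := by
  have h2 : 2 ≤ S.card := by omega
  have hv : v ∈ S := hpv ▸ nextS_mem hp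
  have hs : s ∈ S := hvs ▸ nextS_mem hv
  have hvp : v ≠ p := hpv ▸ nextS_ne hp h2
  have hsv : s ≠ v := hvs ▸ nextS_ne hv h2
  have hsp' : s ≠ p := by
    intro h
    have h' := nextS_nextS_ne hp (by omega)
    rw [hpv, hvs] at h'
    exact h' h
  have hex : (S \ {p, v, s}).Nonempty := by
    rw [← Finset.card_pos]
    have hc3 : ({p, v, s} : Finset (Fin m)).card ≤ 3 := by
      apply le_trans (Finset.card_insert_le _ _)
      have := Finset.card_insert_le v ({s} : Finset (Fin m))
      simp at this ⊢
      omega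
    have := Finset.card_le_card (Finset.inter_subset_right (s₁ := S) (s₂ := {p, v, s}))
    have hsd := Finset.card_sdiff_add_card_inter S ({p, v, s} : Finset (Fin m))
    omega
  obtain ⟨w, hw⟩ := hex
  rw [Finset.mem_sdiff] at hw
  obtain ⟨hwS, hwn⟩ := hw
  simp only [Finset.mem_insert, Finset.mem_singleton, not_or] at hwn
  obtain ⟨hwp, hwv, hws⟩ := hwn
  have c1 : ccw3 p v w := by
    have := nextS_ccw hp hwS hwp (by rw [hpv]; exact hwv)
    rwa [hpv] at this
  have c2 : ccw3 v s w := by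
    have := nextS_ccw hv hwS hwv (by rw [hvs]; exact hws)
    rwa [hvs] at this
  have c3 : ccw3 s p w := by
    have := nextS_ccw hs hwS hws (by rw [hsp]; exact hwp)
    rwa [hsp] at this
  have c4 : ccw3 p v s := by
    have := nextS_ccw hp hs hsp' (by rw [hpv]; exact hsv)
    rwa [hpv] at this
  unfold ccw3 at c1 c2 c3 c4
  omega


lemma card3_adj {S : Finset (Fin m)} {x y : Fin m} (hx : x ∈ S) (hy : y ∈ S)
    (hxy : x ≠ y) (h3 : S.card = 3) : nextS S x = y ∨ nextS S y = x := by
  by_contra hc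
  push_neg at hc
  obtain ⟨hnx, hny⟩ := hc
  have h2 : 2 ≤ S.card := by omega
  have hsub : ({x, y} : Finset (Fin m)) ⊆ S := by
    intro a ha; simp at ha; rcases ha with rfl | rfl <;> assumption
  have hcard2 : ({x, y} : Finset (Fin m)).card = 2 := by
    rw [Finset.card_insert_of_notMem (by simp [hxy]), Finset.card_singleton]
  have hc1 : (S \ {x, y}).card = 1 := by
    rw [Finset.card_sdiff_of_subset hsub, hcard2, h3]
  obtain ⟨z, hz⟩ := Finset.card_eq_one.mp hc1
  have hzmem : z ∈ S \ {x, y} := by rw [hz]; simp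
  rw [Finset.mem_sdiff] at hzmem
  simp only [Finset.mem_insert, Finset.mem_singleton, not_or] at hzmem
  obtain ⟨hzS, hzx, hzy⟩ := hzmem
  have hnxz : nextS S x = z := by
    have hmem : nextS S x ∈ S \ {x, y} := by
      rw [Finset.mem_sdiff]
      refine ⟨nextS_mem hx, ?_⟩
      simp only [Finset.mem_insert, Finset.mem_singleton, not_or]
      exact ⟨nextS_ne hx h2, hnx⟩
    rw [hz] at hmem; simpa using hmem
  have hnyz : nextS S y = z := by
    have hmem : nextS S y ∈ S \ {x, y} := by
      rw [Finset.mem_sdiff]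
      refine ⟨nextS_mem hy, ?_⟩
      simp only [Finset.mem_insert, Finset.mem_singleton, not_or]
      exact ⟨hny, nextS_ne hy h2⟩
    rw [hz] at hmem; simpa using hmem
  have c1 : ccw3 x z y := by
    have := nextS_ccw hx hy hxy.symm (fun h => hnx h.symm)
    rwa [hnxz] at this
  have c2 : ccw3 y z x := by
    have := nextS_ccw hy hx hxy (fun h => hny h.symm)
    rwa [hnyz] at this
  unfold ccw3 at c1 c2
  omega

lemma det2_rot (q : Fin m → Pt) (a b c : Fin m) :
    det2 (q b - q a) (q c - q a) = det2 (q c - q b) (q a - q b) := by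
  simp [det2]; ring

lemma det_pos_of_ccw3 {q : Fin m → Pt} (hconv : CCWConvexPos q) {a b c : Fin m}
    (h : ccw3 a b c) : 0 < det2 (q b - q a) (q c - q a) := by
  rcases h with ⟨h1, h2⟩ | ⟨h1, h2⟩ | ⟨h1, h2⟩
  · exact hconv a b c h1 h2
  · rw [det2_rot]; exact hconv b c a h1 h2
  · rw [det2_rot, det2_rot]; exact hconv c a b h1 h2

lemma det2_linear (u : Pt) : IsLinearMap ℝ (fun x : Pt => det2 x u) := by
  constructor
  · intro x y; simp [det2]; ring
  · intro c x; simp [det2]; ring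

lemma convex_detle (u : Pt) (r : ℝ) : Convex ℝ {x : Pt | det2 x u ≤ r} :=
  convex_halfSpace_le (det2_linear u) r

lemma convex_detge (u : Pt) (r : ℝ) : Convex ℝ {x : Pt | r ≤ det2 x u} :=
  convex_halfSpace_ge (det2_linear u) r

lemma interior_detle (u : Pt) (r : ℝ) (d : Pt) (hd : 0 < det2 d u) :
    interior {x : Pt | det2 x u ≤ r} ⊆ {x : Pt | det2 x u < r} := by
  intro x hx
  have hxle : x ∈ {y : Pt | det2 y u ≤ r} := interior_subset hx
  rw [Set.mem_setOf_eq] at hxle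
  rcases lt_or_eq_of_le hxle with h | h
  · exact h
  · exfalso
    rw [mem_interior_iff_mem_nhds, Metric.mem_nhds_iff] at hx
    obtain ⟨ε, hε, hball⟩ := hx
    have hdne : d ≠ 0 := by
      intro h0; rw [h0] at hd; simp [det2] at hd
    have hdn : 0 < ‖d‖ := norm_pos_iff.mpr hdne
    set c : ℝ := ε / (2 * ‖d‖) with hc
    have hcpos : 0 < c := by positivity
    have hmem : x + c • d ∈ Metric.ball x ε := by
      rw [Metric.mem_ball, dist_eq_norm]
      have : x + c • d - x = c • d := by abel
      rw [this, norm_smul, Real.norm_eq_abs, abs_of_pos hcpos, hc]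
      have hne : ‖d‖ ≠ 0 := ne_of_gt hdn
      rw [show ε / (2 * ‖d‖) * ‖d‖ = ε / 2 by field_simp]
      linarith
    have hle2 : det2 (x + c • d) u ≤ r := hball hmem
    have hexp : det2 (x + c • d) u = det2 x u + c * det2 d u := by
      simp [det2]; ring
    rw [hexp, h] at hle2
    nlinarith
  
lemma interior_detge (u : Pt) (r : ℝ) (d : Pt) (hd : 0 < det2 d u) :
    interior {x : Pt | r ≤ det2 x u} ⊆ {x : Pt | r < det2 x u} := by
  intro x hx
  have hxle : x ∈ {y : Pt | r ≤ det2 y u} := interior_subset hx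
  rw [Set.mem_setOf_eq] at hxle
  rcases lt_or_eq_of_le hxle with h | h
  · exact h
  · exfalso
    rw [mem_interior_iff_mem_nhds, Metric.mem_nhds_iff] at hx
    obtain ⟨ε, hε, hball⟩ := hx
    have hdne : d ≠ 0 := by
      intro h0; rw [h0] at hd; simp [det2] at hd
    have hdn : 0 < ‖d‖ := norm_pos_iff.mpr hdne
    set c : ℝ := ε / (2 * ‖d‖) with hc
    have hcpos : 0 < c := by positivity
    have hmem : x - c • d ∈ Metric.ball x ε := by
      rw [Metric.mem_ball, dist_eq_norm]
      have : x - c • d - x = -(c • d) := by abel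
      rw [this, norm_neg, norm_smul, Real.norm_eq_abs, abs_of_pos hcpos, hc]
      have hne : ‖d‖ ≠ 0 := ne_of_gt hdn
      rw [show ε / (2 * ‖d‖) * ‖d‖ = ε / 2 by field_simp]
      linarith
    have hle2 : r ≤ det2 (x - c • d) u := hball hmem
    have hexp : det2 (x - c • d) u = det2 x u - c * det2 d u := by
      simp [det2]; ring
    rw [hexp, ← h] at hle2
    nlinarith

lemma colin (a u : Pt) (h : det2 a u = 0) (hu : u 0 ≠ 0 ∨ u 1 ≠ 0) : ∃ c : ℝ, a = c • u := by
  simp only [det2] at h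
  rcases hu with h0 | h1
  · refine ⟨a 0 / u 0, ?_⟩
    ext i
    fin_cases i
    · simp; field_simp
    · show a 1 = (a 0 / u 0) * u 1
      field_simp
      nlinarith [h]
  · refine ⟨a 1 / u 1, ?_⟩
    ext i
    fin_cases i
    · show a 0 = (a 1 / u 1) * u 0
      field_simp
      nlinarith [h]
    · simp; field_simp

variable {q : Fin m → Pt}

/-- basic relations around an ear -/
lemma ear_facts {S : Finset (Fin m)} (h4 : 4 ≤ S.card) {v : Fin m} (hv : v ∈ S) :
    prevS S v ∈ S ∧ nextS S v ∈ S ∧ nextS S (prevS S v) = v ∧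
    prevS S v ≠ v ∧ nextS S v ≠ v ∧ nextS S v ≠ prevS S v ∧
    ccw3 (prevS S v) v (nextS S v) := by
  have h2 : 2 ≤ S.card := by omega
  have hp := prevS_mem hv
  have hs := nextS_mem hv
  have hnp := nextS_prevS hv h2
  have hpv := prevS_ne hv h2
  have hsv := nextS_ne hv h2
  have hsp : nextS S v ≠ prevS S v := by
    intro h
    have h' := nextS_nextS_ne hp (by omega)
    rw [hnp, h] at h'
    exact h' rfl
  refine ⟨hp, hs, hnp, hpv, hsv, hsp, ?_⟩
  have := nextS_ccw hp hs hsp (by rw [hnp]; exact hsv)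
  rwa [hnp] at this

lemma diag_claim (hconv : CCWConvexPos q) {S : Finset (Fin m)} (h4 : 4 ≤ S.card)
    {v : Fin m} (hv : v ∈ S) :
    ∀ z ∈ convexHull ℝ (q '' ↑S),
      det2 z (q (nextS S v) - q (prevS S v)) =
        det2 (q (prevS S v)) (q (nextS S v) - q (prevS S v)) →
      z ∈ segment ℝ (q (prevS S v)) (q (nextS S v)) := by
  obtain ⟨hpS, hsS, hnpv, hpv, hsv, hsp, hccw⟩ := ear_facts h4 hv
  set p := prevS S v
  set s := nextS S v
  intro z hz hdet
  have h2 : 2 ≤ S.card := by omega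
  -- neighbors beyond the ear
  set p' := prevS S p with hp'def
  set s' := nextS S s with hs'def
  have hp'S : p' ∈ S := prevS_mem hpS
  have hs'S : s' ∈ S := nextS_mem hsS
  have hnp' : nextS S p' = p := nextS_prevS hpS h2
  have hs'p : s' ≠ p := by
    intro h
    exact no3cycle hpS h4 hnpv rfl (by rw [← hs'def, h])
  have hsp' : s ≠ p' := by
    intro h
    exact no3cycle hpS h4 hnpv rfl (by rw [← h] at hnp'; exact hnp')
  -- the two supporting edges
  have hD1 : 0 < det2 (q p - q p') (q s - q p') :=
    det_pos_of_ccw3 hconv (by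
      have := nextS_ccw hp'S hsS hsp' (by rw [hnp']; exact hsp)
      rwa [hnp'] at this)
  have hD2 : 0 < det2 (q s' - q s) (q p - q s) :=
    det_pos_of_ccw3 hconv (by
      have := nextS_ccw hsS hpS (fun h => hsp h.symm) (fun h => hs'p h.symm)
      exact this)
  -- hull bounds along the two supporting edges
  have hb1 : convexHull ℝ (q '' ↑S) ⊆
      {x : Pt | det2 x (q p - q p') ≤ det2 (q p') (q p - q p')} := by
    apply convexHull_min _ (convex_detle _ _)
    rintro x ⟨w, hwmem, rfl⟩
    rw [Finset.mem_coe] at hwmem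
    show det2 (q w) (q p - q p') ≤ det2 (q p') (q p - q p')
    by_cases hwp' : w = p'
    · rw [hwp']
    by_cases hwp : w = p
    · rw [hwp]
      have : det2 (q p) (q p - q p') - det2 (q p') (q p - q p') = 0 := by simp [det2]; ring
      linarith
    · have hccw' : ccw3 p' p w := by
        have := nextS_ccw hp'S hwmem hwp' (by rw [hnp']; exact hwp)
        rwa [hnp'] at this
      have hDw : 0 < det2 (q p - q p') (q w - q p') := det_pos_of_ccw3 hconv hccw'
      have hkey : det2 (q w) (q p - q p') - det2 (q p') (q p - q p') =
          -(det2 (q p - q p') (q w - q p')) := by simp [det2]; ring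
      linarith
  have hb2 : convexHull ℝ (q '' ↑S) ⊆
      {x : Pt | det2 x (q s' - q s) ≤ det2 (q s) (q s' - q s)} := by
    apply convexHull_min _ (convex_detle _ _)
    rintro x ⟨w, hwmem, rfl⟩
    rw [Finset.mem_coe] at hwmem
    show det2 (q w) (q s' - q s) ≤ det2 (q s) (q s' - q s)
    by_cases hws : w = s
    · rw [hws]
    by_cases hws' : w = s'
    · rw [hws']
      have : det2 (q s') (q s' - q s) - det2 (q s) (q s' - q s) = 0 := by simp [det2]; ring
      linarith
    · have hccw' : ccw3 s s' w := nextS_ccw hsS hwmem hws hws'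
      have hDw : 0 < det2 (q s' - q s) (q w - q s) := det_pos_of_ccw3 hconv hccw'
      have hkey : det2 (q w) (q s' - q s) - det2 (q s) (q s' - q s) =
          -(det2 (q s' - q s) (q w - q s)) := by simp [det2]; ring
      linarith
  -- z lies on the line through q p, q s
  have hαpos : 0 < det2 (q v - q p) (q s - q p) := det_pos_of_ccw3 hconv hccw
  have hzline : det2 (z - q p) (q s - q p) = 0 := by
    have hexp : det2 (z - q p) (q s - q p) =
        det2 z (q s - q p) - det2 (q p) (q s - q p) := by simp [det2]; ring
    rw [hexp, hdet, sub_self]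
  have hu01 : (q s - q p) 0 ≠ 0 ∨ (q s - q p) 1 ≠ 0 := by
    by_contra hcon
    push_neg at hcon
    obtain ⟨h0, h1⟩ := hcon
    rw [show det2 (q v - q p) (q s - q p) = 0 by simp [det2, h0, h1]] at hαpos
    exact lt_irrefl 0 hαpos
  obtain ⟨c, hc⟩ := colin _ _ hzline hu01
  have hz' : z = q p + c • (q s - q p) := by rw [← hc]; abel
  -- c ≥ 0
  have hzb1 := hb1 hz
  rw [Set.mem_setOf_eq] at hzb1
  have key1 : det2 z (q p - q p') - det2 (q p') (q p - q p') =
      c * (-(det2 (q p - q p') (q s - q p'))) := by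
    rw [hz']; simp [det2]; ring
  have hc0 : 0 ≤ c := by nlinarith
  -- c ≤ 1
  have hzb2 := hb2 hz
  rw [Set.mem_setOf_eq] at hzb2
  have key2 : det2 z (q s' - q s) - det2 (q s) (q s' - q s) =
      (c - 1) * det2 (q s' - q s) (q p - q s) := by
    rw [hz']; simp [det2]; ring
  have hc1 : c ≤ 1 := by nlinarith
  refine ⟨1 - c, c, by linarith, hc0, by ring, ?_⟩
  rw [hz']; module


lemma ear (hconv : CCWConvexPos q) {S : Finset (Fin m)} (h4 : 4 ≤ S.card)
    {v : Fin m} (hv : v ∈ S) :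
    (convexHull ℝ (q '' ↑S) =
      convexHull ℝ (q '' ↑(S.erase v)) ∪
        convexHull ℝ ({q (prevS S v), q v, q (nextS S v)} : Set Pt)) ∧
    interior (convexHull ℝ (q '' ↑(S.erase v))) ∩
      interior (convexHull ℝ ({q (prevS S v), q v, q (nextS S v)} : Set Pt)) = ∅ := by
  obtain ⟨hpS, hsS, hnpv, hpv, hsv, hsp, hccw⟩ := ear_facts h4 hv
  set p := prevS S v with hpdef
  set s := nextS S v with hsdef
  have h2 : 2 ≤ S.card := by omega
  have hαpos : 0 < det2 (q v - q p) (q s - q p) := det_pos_of_ccw3 hconv hccw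
  have hvgt : det2 (q p) (q s - q p) < det2 (q v) (q s - q p) := by
    have : det2 (q v) (q s - q p) - det2 (q p) (q s - q p) =
        det2 (q v - q p) (q s - q p) := by simp [det2]; ring
    linarith
  have hus : det2 (q s) (q s - q p) = det2 (q p) (q s - q p) := by simp [det2]; ring
  -- hull of the rest is inside the halfplane det2 · u ≤ r
  have hrest_sub : convexHull ℝ (q '' ↑(S.erase v)) ⊆
      {x : Pt | det2 x (q s - q p) ≤ det2 (q p) (q s - q p)} := by
    apply convexHull_min _ (convex_detle _ _)
    rintro x ⟨w, hwmem, rfl⟩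
    rw [Finset.mem_coe, Finset.mem_erase] at hwmem
    obtain ⟨hwv, hwS⟩ := hwmem
    show det2 (q w) (q s - q p) ≤ det2 (q p) (q s - q p)
    by_cases hwp : w = p
    · rw [hwp]
    by_cases hws : w = s
    · rw [hws, hus]
    · have c1 : ccw3 p v w := by
        have := nextS_ccw hpS hwS hwp (by rw [hnpv]; exact hwv)
        rwa [hnpv] at this
      have c2 : ccw3 v s w := nextS_ccw hv hwS hwv hws
      have c3 : ccw3 p s w := by unfold ccw3 at c1 c2 hccw ⊢; omega
      have hD : 0 < det2 (q s - q p) (q w - q p) := det_pos_of_ccw3 hconv c3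
      have hkey : det2 (q w) (q s - q p) - det2 (q p) (q s - q p) =
          -(det2 (q s - q p) (q w - q p)) := by simp [det2]; ring
      linarith
  -- triangle is inside the other halfplane
  have htri_sub : convexHull ℝ ({q p, q v, q s} : Set Pt) ⊆
      {x : Pt | det2 (q p) (q s - q p) ≤ det2 x (q s - q p)} := by
    apply convexHull_min _ (convex_detge _ _)
    intro x hx
    rcases hx with rfl | rfl | rfl
    · rw [Set.mem_setOf_eq]
    · rw [Set.mem_setOf_eq]; exact le_of_lt hvgt
    · rw [Set.mem_setOf_eq, hus]
  constructor
  · -- the union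
    apply Set.Subset.antisymm
    · -- hull S ⊆ rest ∪ triangle
      have himg : q '' ↑S = insert (q v) (q '' ↑(S.erase v)) := by
        ext x
        constructor
        · rintro ⟨w, hwS, rfl⟩
          rw [Finset.mem_coe] at hwS
          by_cases hwv : w = v
          · left; rw [hwv]
          · right; exact ⟨w, Finset.mem_coe.mpr (Finset.mem_erase.mpr ⟨hwv, hwS⟩), rfl⟩
        · rintro (rfl | ⟨w, hw, rfl⟩)
          · exact ⟨v, Finset.mem_coe.mpr hv, rfl⟩
          · rw [Finset.mem_coe, Finset.mem_erase] at hw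
            exact ⟨w, Finset.mem_coe.mpr hw.2, rfl⟩
      have hrest_ne : (q '' ↑(S.erase v)).Nonempty :=
        ⟨q p, ⟨p, Finset.mem_coe.mpr (Finset.mem_erase.mpr ⟨hpv, hpS⟩), rfl⟩⟩
      rw [himg, convexHull_insert hrest_ne]
      intro y hy
      rw [mem_convexJoin] at hy
      obtain ⟨x0, hx0, x, hxrest, hyseg⟩ := hy
      rw [Set.mem_singleton_iff] at hx0
      subst hx0
      obtain ⟨a, b, ha, hb, hab, hy'⟩ := hyseg
      -- basic memberships
      have hqv_tri : q v ∈ convexHull ℝ ({q p, q v, q s} : Set Pt) :=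
        subset_convexHull _ _ (by simp)
      have hqp_tri : q p ∈ convexHull ℝ ({q p, q v, q s} : Set Pt) :=
        subset_convexHull _ _ (by simp)
      have hqs_tri : q s ∈ convexHull ℝ ({q p, q v, q s} : Set Pt) :=
        subset_convexHull _ _ (by simp)
      have hseg_tri : segment ℝ (q p) (q s) ⊆ convexHull ℝ ({q p, q v, q s} : Set Pt) :=
        (convex_convexHull ℝ _).segment_subset hqp_tri hqs_tri
      have hqp_rest : q p ∈ convexHull ℝ (q '' ↑(S.erase v)) :=
        subset_convexHull _ _ ⟨p, Finset.mem_coe.mpr (Finset.mem_erase.mpr ⟨hpv, hpS⟩), rfl⟩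
      have hqs_rest : q s ∈ convexHull ℝ (q '' ↑(S.erase v)) :=
        subset_convexHull _ _ ⟨s, Finset.mem_coe.mpr (Finset.mem_erase.mpr ⟨hsv, hsS⟩), rfl⟩
      have hseg_rest : segment ℝ (q p) (q s) ⊆ convexHull ℝ (q '' ↑(S.erase v)) :=
        (convex_convexHull ℝ _).segment_subset hqp_rest hqs_rest
      have hsubcoe : (↑(S.erase v) : Set (Fin m)) ⊆ (↑S : Set (Fin m)) := by
        intro w hw
        rw [Finset.mem_coe] at hw ⊢
        exact Finset.mem_of_mem_erase hw
      have hrestS : convexHull ℝ (q '' ↑(S.erase v)) ⊆ convexHull ℝ (q '' ↑S) :=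
        convexHull_mono (Set.image_mono hsubcoe)
      have hβ : det2 x (q s - q p) ≤ det2 (q p) (q s - q p) := hrest_sub hxrest
      by_cases hβ0 : det2 x (q s - q p) = det2 (q p) (q s - q p)
      · -- x on the diagonal
        have hxseg : x ∈ segment ℝ (q p) (q s) :=
          diag_claim hconv h4 hv x (hrestS hxrest) hβ0
        right
        have : segment ℝ (q v) x ⊆ convexHull ℝ ({q p, q v, q s} : Set Pt) :=
          (convex_convexHull ℝ _).segment_subset hqv_tri (hseg_tri hxseg)
        exact this ⟨a, b, ha, hb, hab, hy'⟩
      · have hβlt : det2 x (q s - q p) < det2 (q p) (q s - q p) := lt_of_le_of_ne hβ hβ0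
        set A := det2 (q v) (q s - q p) with hA
        set Bx := det2 x (q s - q p) with hB
        set r := det2 (q p) (q s - q p) with hr
        have hden : 0 < A - Bx := by linarith
        set t₀ : ℝ := (A - r) / (A - Bx) with ht₀
        have ht0pos : 0 < t₀ := div_pos (by linarith) hden
        have ht0lt : t₀ < 1 := by
          rw [ht₀, div_lt_one hden]; linarith
        set w : Pt := (1 - t₀) • q v + t₀ • x with hwdef
        have hwdet : det2 w (q s - q p) = r := by
          have hexp : det2 w (q s - q p) = (1 - t₀) * A + t₀ * Bx := by
            rw [hwdef, hA, hB]; simp [det2]; ring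
          rw [hexp, ht₀]
          field_simp
          ring
        have hqvS : q v ∈ convexHull ℝ (q '' ↑S) := by
          apply subset_convexHull
          exact ⟨v, Finset.mem_coe.mpr hv, rfl⟩
        have hwhull : w ∈ convexHull ℝ (q '' ↑S) := by
          rw [hwdef]
          exact (convex_convexHull ℝ _) hqvS
            (hrestS hxrest) (by linarith) (le_of_lt ht0pos) (by ring)
        have hwseg : w ∈ segment ℝ (q p) (q s) := diag_claim hconv h4 hv w hwhull hwdet
        by_cases hbt : b ≤ t₀
        · -- y in the triangle
          right
          have ha' : a = 1 - b := by linarith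
          have hyeq : (1 - b / t₀) • (q v) + (b / t₀) • w = y := by
            rw [hwdef, ← hy', ha']
            match_scalars <;> (field_simp; try ring)
          have hmem : (1 - b / t₀) • (q v) + (b / t₀) • w ∈
              convexHull ℝ ({q p, q v, q s} : Set Pt) :=
            (convex_convexHull ℝ _) hqv_tri (hseg_tri hwseg)
              (by rw [sub_nonneg, div_le_one ht0pos]; exact hbt)
              (div_nonneg hb (le_of_lt ht0pos)) (by ring)
          rwa [hyeq] at hmem
        · -- y in the rest
          left
          push_neg at hbt
          have h1t : 0 < 1 - t₀ := by linarith
          have hb1 : b ≤ 1 := by linarith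
          have ha' : a = 1 - b := by linarith
          have hyeq : ((1 - b) / (1 - t₀)) • w + ((b - t₀) / (1 - t₀)) • x = y := by
            rw [hwdef, ← hy', ha']
            match_scalars <;> (field_simp; try ring)
          have hmem : ((1 - b) / (1 - t₀)) • w + ((b - t₀) / (1 - t₀)) • x ∈
              convexHull ℝ (q '' ↑(S.erase v)) :=
            (convex_convexHull ℝ _) (hseg_rest hwseg) hxrest
              (div_nonneg (by linarith) (le_of_lt h1t))
              (div_nonneg (by linarith) (le_of_lt h1t))
              (by field_simp; ring)
          rwa [hyeq] at hmem
    · -- rest ∪ triangle ⊆ hull S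
      apply Set.union_subset
      · apply convexHull_mono
        apply Set.image_mono
        intro w hw
        rw [Finset.mem_coe] at hw ⊢
        exact Finset.mem_of_mem_erase hw
      · apply convexHull_mono
        intro x hx
        rcases hx with rfl | rfl | rfl
        · exact ⟨p, Finset.mem_coe.mpr hpS, rfl⟩
        · exact ⟨v, Finset.mem_coe.mpr hv, rfl⟩
        · exact ⟨s, Finset.mem_coe.mpr hsS, rfl⟩
  · -- disjoint interiors
    have hi1 : interior (convexHull ℝ (q '' ↑(S.erase v))) ⊆
        {x : Pt | det2 x (q s - q p) < det2 (q p) (q s - q p)} :=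
      (interior_mono hrest_sub).trans (interior_detle _ _ _ hαpos)
    have hi2 : interior (convexHull ℝ ({q p, q v, q s} : Set Pt)) ⊆
        {x : Pt | det2 (q p) (q s - q p) < det2 x (q s - q p)} :=
      (interior_mono htri_sub).trans (interior_detge _ _ _ hαpos)
    rw [Set.eq_empty_iff_forall_notMem]
    rintro x ⟨h1x, h2x⟩
    have := hi1 h1x
    have := hi2 h2x
    rw [Set.mem_setOf_eq] at *
    linarith


lemma step (hconv : CCWConvexPos q) {S : Finset (Fin m)} {n : ℕ} (hcard : S.card = n)
    (h4 : 4 ≤ n) {v : Fin m} (hv : v ∈ S) {B' B'' : Finset (Fin m)}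
    (htri : ((({prevS S v, v, nextS S v} : Finset (Fin m))) ∩ B').card = 1)
    (hcompat : ∀ t : Finset (Fin m), t ⊆ S.erase v → t ∩ B'' = t ∩ B')
    (IH : ∃ T : Finset (Finset (Fin m)),
      T.card = (n - 1) - 2 ∧
      (∀ t ∈ T, t ⊆ S.erase v ∧ t.card = 3 ∧ (t ∩ B'').card = 1) ∧
      (∀ t₁ ∈ T, ∀ t₂ ∈ T, t₁ ≠ t₂ →
        interior (convexHull ℝ (q '' (t₁ : Set (Fin m)))) ∩
          interior (convexHull ℝ (q '' (t₂ : Set (Fin m)))) = ∅) ∧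
      (⋃ t ∈ T, convexHull ℝ (q '' (t : Set (Fin m)))) = convexHull ℝ (q '' ↑(S.erase v))) :
    ∃ T : Finset (Finset (Fin m)),
      T.card = n - 2 ∧
      (∀ t ∈ T, t ⊆ S ∧ t.card = 3 ∧ (t ∩ B').card = 1) ∧
      (∀ t₁ ∈ T, ∀ t₂ ∈ T, t₁ ≠ t₂ →
        interior (convexHull ℝ (q '' (t₁ : Set (Fin m)))) ∩
          interior (convexHull ℝ (q '' (t₂ : Set (Fin m)))) = ∅) ∧
      (⋃ t ∈ T, convexHull ℝ (q '' (t : Set (Fin m)))) = convexHull ℝ (q '' ↑S) := by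
  obtain ⟨T', hT'card, hT'props, hT'disj, hT'union⟩ := IH
  have h4' : 4 ≤ S.card := by omega
  obtain ⟨hpS, hsS, hnpv, hpv, hsv, hsp, hccw⟩ := ear_facts h4' hv
  set p := prevS S v with hpdef
  set s := nextS S v with hsdef
  set tri : Finset (Fin m) := {p, v, s} with htridef
  have htri_img : (q '' ↑tri : Set Pt) = {q p, q v, q s} := by
    rw [htridef]
    simp [Finset.coe_insert, Set.image_insert_eq]
  have htri_card : tri.card = 3 := by
    rw [htridef]
    rw [Finset.card_insert_of_notMem (by simp [hpv, Ne.symm hsp]),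
      Finset.card_insert_of_notMem (by simp [Ne.symm hsv]), Finset.card_singleton]
  have hvtri : v ∈ tri := by rw [htridef]; simp
  have htri_not : tri ∉ T' := by
    intro hmem
    have := (hT'props tri hmem).1 hvtri
    exact (Finset.mem_erase.mp this).1 rfl
  have hearr := ear hconv h4' hv
  refine ⟨insert tri T', ?_, ?_, ?_, ?_⟩
  · rw [Finset.card_insert_of_notMem htri_not, hT'card]; omega
  · intro t ht
    rcases Finset.mem_insert.mp ht with rfl | ht'
    · refine ⟨?_, htri_card, htri⟩
      rw [htridef]
      intro x hx
      simp only [Finset.mem_insert, Finset.mem_singleton] at hx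
      rcases hx with rfl | rfl | rfl
      · exact hpS
      · exact hv
      · exact hsS
    · obtain ⟨hsub, hc3, hcB⟩ := hT'props t ht'
      exact ⟨hsub.trans (Finset.erase_subset _ _), hc3, by rw [← hcompat t hsub]; exact hcB⟩
  · intro t₁ h₁ t₂ h₂ hne
    rcases Finset.mem_insert.mp h₁ with rfl | h₁' <;> rcases Finset.mem_insert.mp h₂ with h₂e | h₂'
    · exact absurd h₂e.symm hne
    · -- t₁ = tri, t₂ ∈ T'
      have hsub2 : interior (convexHull ℝ (q '' (t₂ : Set (Fin m)))) ⊆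
          interior (convexHull ℝ (q '' ↑(S.erase v))) := by
        apply interior_mono
        apply convexHull_mono
        apply Set.image_mono
        exact fun x hx => Finset.mem_coe.mpr ((hT'props t₂ h₂').1 (Finset.mem_coe.mp hx))
      rw [Set.eq_empty_iff_forall_notMem]
      rintro x ⟨hx1, hx2⟩
      have : x ∈ interior (convexHull ℝ (q '' ↑(S.erase v))) ∩
          interior (convexHull ℝ ({q p, q v, q s} : Set Pt)) := by
        refine ⟨hsub2 hx2, ?_⟩
        rwa [htri_img] at hx1
      rw [hearr.2] at this
      exact this
    · -- t₁ ∈ T', t₂ = tri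
      subst h₂e
      have hsub1 : interior (convexHull ℝ (q '' (t₁ : Set (Fin m)))) ⊆
          interior (convexHull ℝ (q '' ↑(S.erase v))) := by
        apply interior_mono
        apply convexHull_mono
        apply Set.image_mono
        exact fun x hx => Finset.mem_coe.mpr ((hT'props t₁ h₁').1 (Finset.mem_coe.mp hx))
      rw [Set.eq_empty_iff_forall_notMem]
      rintro x ⟨hx1, hx2⟩
      have : x ∈ interior (convexHull ℝ (q '' ↑(S.erase v))) ∩
          interior (convexHull ℝ ({q p, q v, q s} : Set Pt)) := by
        refine ⟨hsub1 hx1, ?_⟩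
        rwa [htri_img] at hx2
      rw [hearr.2] at this
      exact this
    · exact hT'disj t₁ h₁' t₂ h₂' hne
  · rw [Finset.set_biUnion_insert, hT'union, htri_img, hearr.1, Set.union_comm]

lemma main_ind (hconv : CCWConvexPos q) : ∀ n : ℕ, 3 ≤ n → ∀ S : Finset (Fin m), S.card = n →
    ∀ B' : Finset (Fin m), B' ⊆ S → B'.Nonempty → (∀ i ∈ B', nextS S i ∉ B') →
    ∃ T : Finset (Finset (Fin m)),
      T.card = n - 2 ∧
      (∀ t ∈ T, t ⊆ S ∧ t.card = 3 ∧ (t ∩ B').card = 1) ∧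
      (∀ t₁ ∈ T, ∀ t₂ ∈ T, t₁ ≠ t₂ →
        interior (convexHull ℝ (q '' (t₁ : Set (Fin m)))) ∩
          interior (convexHull ℝ (q '' (t₂ : Set (Fin m)))) = ∅) ∧
      (⋃ t ∈ T, convexHull ℝ (q '' (t : Set (Fin m)))) = convexHull ℝ (q '' ↑S) := by
  intro n
  induction n using Nat.strong_induction_on with
  | _ n ih =>
  intro hn3 S hcard B' hBS hBne hcond
  by_cases hn3' : n = 3
  · -- base case
    subst hn3'
    have hB1 : B'.card = 1 := by
      have hge : 1 ≤ B'.card := Finset.card_pos.mpr hBne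
      have hle : B'.card ≤ 1 := by
        rw [Finset.card_le_one]
        intro a ha b hb
        by_contra hab
        rcases card3_adj (hBS ha) (hBS hb) hab hcard with h | h
        · exact hcond a ha (h ▸ hb)
        · exact hcond b hb (h ▸ ha)
      omega
    refine ⟨{S}, by simp, ?_, ?_, ?_⟩
    · intro t ht
      rw [Finset.mem_singleton] at ht
      subst ht
      refine ⟨Finset.Subset.refl _, hcard, ?_⟩
      rw [Finset.inter_eq_right.mpr hBS]
      exact hB1
    · intro t₁ h₁ t₂ h₂ hne
      rw [Finset.mem_singleton] at h₁ h₂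
      exact absurd (h₁.trans h₂.symm) hne
    · simp
  · -- inductive step: n ≥ 4
    have h4 : 4 ≤ n := by omega
    have h4' : 4 ≤ S.card := by omega
    have h2' : 2 ≤ S.card := by omega
    have h3' : 3 ≤ S.card := by omega
    obtain ⟨b, hb⟩ := hBne
    have hbS : b ∈ S := hBS hb
    by_cases hB1 : B'.card = 1
    · -- single black vertex: cut the ear at v = nextS S b
      have hB'eq : B' = {b} := by
        obtain ⟨c, hc⟩ := Finset.card_eq_one.mp hB1
        rw [hc] at hb ⊢
        rw [Finset.mem_singleton] at hb
        rw [hb]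
      set v := nextS S b with hvdef
      have hvS : v ∈ S := nextS_mem hbS
      have hvb : v ≠ b := nextS_ne hbS h2'
      have hpb : prevS S v = b := by
        by_contra hpb
        have hpS : prevS S v ∈ S := prevS_mem hvS
        have hnpv : nextS S (prevS S v) = v := nextS_prevS hvS h2'
        have hpv : prevS S v ≠ v := prevS_ne hvS h2'
        have c1 : ccw3 (prevS S v) v b := by
          have := nextS_ccw hpS hbS (fun h => hpb h.symm) (by rw [hnpv]; exact Ne.symm hvb)
          rwa [hnpv] at this
        have c2 : ccw3 b v (prevS S v) := by
          have := nextS_ccw hbS hpS (fun h => hpb h) (by rw [← hvdef]; exact hpv)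
          rwa [← hvdef] at this
        unfold ccw3 at c1 c2
        omega
      have hsb : nextS S v ≠ b := by
        rw [hvdef]
        exact nextS_nextS_ne hbS h3'
      have hbEr : b ∈ S.erase v := Finset.mem_erase.mpr ⟨Ne.symm hvb, hbS⟩
      have h2er : 2 ≤ (S.erase v).card := by
        rw [Finset.card_erase_of_mem hvS]; omega
      apply step hconv hcard h4 hvS (B'' := B')
      · -- triangle has exactly one black vertex
        rw [hB'eq]
        have : ({prevS S v, v, nextS S v} : Finset (Fin m)) ∩ {b} = {b} := by
          ext x
          simp only [Finset.mem_inter, Finset.mem_insert, Finset.mem_singleton]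
          constructor
          · rintro ⟨_, rfl⟩; rfl
          · rintro rfl; exact ⟨Or.inl hpb.symm, rfl⟩
        rw [this, Finset.card_singleton]
      · exact fun t _ => rfl
      · -- apply IH
        apply ih (n - 1) (by omega) (by omega) (S.erase v)
          (by rw [Finset.card_erase_of_mem hvS, hcard])
        · rw [hB'eq]
          intro x hx
          rw [Finset.mem_singleton] at hx
          subst hx
          exact hbEr
        · exact ⟨b, hb⟩
        · intro i hi
          rw [hB'eq] at hi
          rw [Finset.mem_singleton] at hi
          subst hi
          rw [hB'eq, Finset.mem_singleton]
          exact nextS_ne hbEr h2er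
    · -- at least two black vertices: cut the ear at v = b
      have hB2 : 2 ≤ B'.card := by
        have := Finset.card_pos.mpr ⟨b, hb⟩
        omega
      set v := b with hvdef
      have hpS : prevS S v ∈ S := prevS_mem hbS
      have hnpv : nextS S (prevS S v) = v := nextS_prevS hbS h2'
      have hpB : prevS S v ∉ B' := by
        intro h
        have h2 := hcond _ h
        rw [hnpv] at h2
        exact h2 hb
      have hsB : nextS S v ∉ B' := hcond b hb
      have hpv : prevS S v ≠ v := prevS_ne hbS h2'
      have hsv : nextS S v ≠ v := nextS_ne hbS h2'
      apply step hconv hcard h4 hbS (B'' := B'.erase b)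
      · have : ({prevS S v, v, nextS S v} : Finset (Fin m)) ∩ B' = {b} := by
          ext x
          simp only [Finset.mem_inter, Finset.mem_insert, Finset.mem_singleton]
          constructor
          · rintro ⟨hx1 | hx1 | hx1, hxB⟩
            · exact absurd (hx1 ▸ hxB) hpB
            · exact hx1
            · exact absurd (hx1 ▸ hxB) hsB
          · rintro rfl
            exact ⟨Or.inr (Or.inl rfl), hb⟩
        rw [this, Finset.card_singleton]
      · intro t hsub
        ext x
        rw [Finset.mem_inter, Finset.mem_inter]
        constructor
        · rintro ⟨hxt, hxB⟩
          exact ⟨hxt, Finset.mem_of_mem_erase hxB⟩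
        · rintro ⟨hxt, hxB⟩
          refine ⟨hxt, Finset.mem_erase.mpr ⟨?_, hxB⟩⟩
          exact (Finset.mem_erase.mp (hsub hxt)).1
      · -- apply IH
        have herase_card : (S.erase b).card = n - 1 := by
          rw [Finset.card_erase_of_mem hbS, hcard]
        have h3er : 3 ≤ (S.erase b).card := by omega
        apply ih (n - 1) (by omega) (by omega) (S.erase b) herase_card
        · intro x hx
          rw [Finset.mem_erase] at hx ⊢
          exact ⟨hx.1, hBS hx.2⟩
        · rw [← Finset.card_pos, Finset.card_erase_of_mem hb]
          omega
        · intro i hi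
          rw [Finset.mem_erase] at hi
          obtain ⟨hib, hiB⟩ := hi
          have hiS : i ∈ S := hBS hiB
          rw [nextS_erase hbS hiS hib h3']
          split_ifs with h
          · intro hmem
            exact hcond b hb (Finset.mem_of_mem_erase hmem)
          · intro hmem
            exact hcond i hiB (Finset.mem_of_mem_erase hmem)


end BT

open BT in
/-- A convex polygon whose vertices are 2-or-more colored with no two
cyclically consecutive black vertices admits a triangulation in which every triangle has
exactly one black vertex. -/
theorem bichromatic_triangulation
    {m : ℕ} (hm : 3 ≤ m) (q : Fin m → Pt) (hconv : CCWConvexPos q)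
    (B : Finset (Fin m)) (hBne : B.Nonempty)
    (hnoconsec : ∀ i : Fin m, ¬ (i ∈ B ∧ cyclicSucc (by omega) i ∈ B)) :
    ∃ T : Finset (Finset (Fin m)),
      T.card = m - 2 ∧
      (∀ t ∈ T, t.card = 3 ∧ (t ∩ B).card = 1) ∧
      (∀ t₁ ∈ T, ∀ t₂ ∈ T, t₁ ≠ t₂ →
        interior (convexHull ℝ (q '' (t₁ : Set (Fin m)))) ∩
          interior (convexHull ℝ (q '' (t₂ : Set (Fin m)))) = ∅) ∧
      (⋃ t ∈ T, convexHull ℝ (q '' (t : Set (Fin m)))) = convexHull ℝ (Set.range q) := by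
  have hm0 : 0 < m := by omega
  have hcu : (Finset.univ : Finset (Fin m)).card = m := by simp
  have hcs : ∀ i : Fin m, nextS (Finset.univ : Finset (Fin m)) i = cyclicSucc hm0 i := by
    intro i
    apply nextS_unique (Finset.mem_univ i) (by rw [hcu]; omega) (Finset.mem_univ _)
    · intro h
      have hi := i.isLt
      have hval : ((i : ℕ) + 1) % m = (i : ℕ) := congrArg Fin.val h
      rcases Nat.lt_or_ge ((i:ℕ)+1) m with hlt | hge
      · rw [Nat.mod_eq_of_lt hlt] at hval; omega
      · have heq : (i:ℕ) + 1 = m := by omega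
        rw [heq, Nat.mod_self] at hval
        omega
    · intro w _ hwi hwn
      have hi := i.isLt
      have hw := w.isLt
      have hwi' : (w:ℕ) ≠ (i:ℕ) := fun h => hwi (Fin.ext h)
      rcases Nat.lt_or_ge ((i:ℕ)+1) m with hlt | hge
      · have hcsval : ((cyclicSucc hm0 i : Fin m) : ℕ) = (i:ℕ)+1 := by
          simp [cyclicSucc, Nat.mod_eq_of_lt hlt]
        have hwn' : (w:ℕ) ≠ (i:ℕ)+1 := by
          intro h
          exact hwn (Fin.ext (by rw [hcsval, h]))
        unfold ccw3
        rw [hcsval]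
        omega
      · have him : (i:ℕ)+1 = m := by omega
        have hcsval : ((cyclicSucc hm0 i : Fin m) : ℕ) = 0 := by
          simp [cyclicSucc, him]
        have hwn' : (w:ℕ) ≠ 0 := fun h => hwn (Fin.ext (by rw [hcsval, h]))
        unfold ccw3
        rw [hcsval]
        omega
  obtain ⟨T, hcard, hprops, hdisj, hunion⟩ :=
    main_ind hconv m hm Finset.univ hcu B (Finset.subset_univ B) hBne (by
      intro i hi
      rw [hcs i]
      intro hmem
      exact hnoconsec i ⟨hi, hmem⟩)
  refine ⟨T, hcard, fun t ht => ⟨(hprops t ht).2.1, (hprops t ht).2.2⟩, hdisj, ?_⟩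
  rw [hunion, Finset.coe_univ, Set.image_univ]
end
end
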